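/- Let t be a squarefree positive integer. The maps (a,b,c) ↦ (tb/(c-a), 2t^2/(c-a)) and (x,y) ↦ ((x^2-t^2)/y, 2tx/y, (x^2+t^2)/y) are mutually inverse bijections between rational triples (a,b,c) with a^2+b^2=c^2, ab/2 = t, and c ≠ a, and rational points (x,y) on y^2 = x^3 - t^2 x with y ≠ 0. -/

import Mathlib

theorem triangle_elliptic_bijection (t : ℕ) (ht : 0 < t) (htsf : Squarefree t) :
    (∀ a b c : ℚ, a ^ 2 + b ^ 2 = c ^ 2 → a * b / 2 = t → c ≠ a →
      ((2 * (t : ℚ) ^ 2 / (c - a)) ^ 2 =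
          ((t : ℚ) * b / (c - a)) ^ 3 - (t : ℚ) ^ 2 * ((t : ℚ) * b / (c - a)) ∧
        2 * (t : ℚ) ^ 2 / (c - a) ≠ 0 ∧
        ((((t : ℚ) * b / (c - a)) ^ 2 - t ^ 2) / (2 * (t : ℚ) ^ 2 / (c - a)) = a ∧
          2 * t * ((t : ℚ) * b / (c - a)) / (2 * (t : ℚ) ^ 2 / (c - a)) = b ∧
          (((t : ℚ) * b / (c - a)) ^ 2 + t ^ 2) / (2 * (t : ℚ) ^ 2 / (c - a)) = c))) ∧
    (∀ x y : ℚ, y ^ 2 = x ^ 3 - t ^ 2 * x → y ≠ 0 →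
      (((x ^ 2 - t ^ 2) / y) ^ 2 + (2 * t * x / y) ^ 2 = ((x ^ 2 + t ^ 2) / y) ^ 2 ∧
        ((x ^ 2 - t ^ 2) / y) * (2 * t * x / y) / 2 = t ∧
        (x ^ 2 + t ^ 2) / y ≠ (x ^ 2 - t ^ 2) / y ∧
        ((t : ℚ) * (2 * t * x / y) / ((x ^ 2 + t ^ 2) / y - (x ^ 2 - t ^ 2) / y) = x ∧
          2 * (t : ℚ) ^ 2 / ((x ^ 2 + t ^ 2) / y - (x ^ 2 - t ^ 2) / y) = y))) := by
  have ht' : (t : ℚ) ≠ 0 := by positivity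
  constructor
  · intro a b c h hab hca
    have hd : c - a ≠ 0 := sub_ne_zero.mpr hca
    have hab' : a * b = 2 * t := by field_simp at hab; linarith
    refine ⟨?_, ?_, ?_, ?_, ?_⟩
    · field_simp
      linear_combination (-2 * (c - a)) * hab' - b * h
    · positivity
    · field_simp
      linear_combination h
    · field_simp
    · field_simp
      linear_combination h
  · intro x y hxy hy
    refine ⟨by field_simp; ring, ?_, ?_, ?_, ?_⟩
    · field_simp
      linear_combination (-1:ℚ) * hxy
    · intro heq
      field_simp at heq
      exact ht' (by nlinarith [heq])
    · rw [div_sub_div_same]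
      have : x ^ 2 + t ^ 2 - (x ^ 2 - t ^ 2) = 2 * t ^ 2 := by ring
      rw [this]
      field_simp
    · rw [div_sub_div_same]
      have : x ^ 2 + t ^ 2 - (x ^ 2 - t ^ 2) = 2 * t ^ 2 := by ring
      rw [this]
      rw [div_div_eq_mul_div]
      field_simp
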